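/- Let O be a symmetric operad and P(O) the Lawvere theory of spans associated to O. Every isomorphism n → n in P(O) is represented by a unique span (φ, id_n, (a_i)_{i≤n}) where φ : (n] → (n] is a bijection and each a_i ∈ O_1 is invertible with respect to operadic composition (i.e. there is b_i ∈ O_1 with a_i ∗ b_i = ι = b_i ∗ a_i). -/

import Mathlib

/-- One step of the lexicographic decomposition of a sigma of `Fin`s. -/
def finSigmaSucc {k : ℕ} (ns : Fin (k + 1) → ℕ) :
    (Σ i : Fin (k + 1), Fin (ns i)) ≃ (Fin (ns 0) ⊕ Σ i : Fin k, Fin (ns i.succ)) where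
  toFun p := Fin.cases (motive := fun i => Fin (ns i) → Fin (ns 0) ⊕ Σ i : Fin k, Fin (ns i.succ))
      (fun j => Sum.inl j) (fun i j => Sum.inr ⟨i, j⟩) p.1 p.2
  invFun q := q.elim (fun j => ⟨0, j⟩) (fun q => ⟨q.1.succ, q.2⟩)
  left_inv := by rintro ⟨i, j⟩; induction i using Fin.cases <;> simp
  right_inv := by rintro (j | ⟨i, j⟩) <;> simp

/-- The lexicographic identification of `Σ i, Fin (ns i)` with `Fin (∑ i, ns i)`. -/
def finSigma : ∀ {k : ℕ} (ns : Fin k → ℕ), (Σ i : Fin k, Fin (ns i)) ≃ Fin (∑ i, ns i)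
  | 0, ns => (Equiv.equivOfIsEmpty _ _ : (Σ i : Fin 0, Fin (ns i)) ≃ Fin 0).trans
      (finCongr (by simp))
  | k + 1, ns =>
    (finSigmaSucc ns).trans <|
      ((Equiv.refl (Fin (ns 0))).sumCongr (finSigma fun i => ns i.succ)).trans <|
        finSumFinEquiv.trans (finCongr (Fin.sum_univ_succ ns).symm)

/-- Operadic composition of permutations: on the lexicographic block decomposition,
`⟨i, r⟩ ↦ ⟨τ i, σs (τ i) r⟩`. -/
def symComp {k : ℕ} (ns : Fin k → ℕ) (σs : ∀ i, Equiv.Perm (Fin (ns i)))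
    (τ : Equiv.Perm (Fin k)) : Equiv.Perm (Fin (∑ i, ns i)) :=
  (finCongr (Equiv.sum_comp τ ns)).symm.trans <|
    ((finSigma fun i => ns (τ i)).symm.trans
      ((Equiv.sigmaCongr τ fun i => σs (τ i)).trans (finSigma ns)))

/-- A symmetric operad. -/
structure SymOperad where
  ops : ℕ → Type
  unit : ops 1
  comp : ∀ {k : ℕ} (ns : Fin k → ℕ), (∀ i, ops (ns i)) → ops k → ops (∑ i, ns i)
  act : ∀ {n : ℕ}, Equiv.Perm (Fin n) → ops n → ops n
  act_one : ∀ {n : ℕ} (x : ops n), act (Equiv.refl (Fin n)) x = x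
  act_mul : ∀ {n : ℕ} (σ τ : Equiv.Perm (Fin n)) (x : ops n),
    act (σ * τ) x = act σ (act τ x)
  comp_unit_left : ∀ {n : ℕ} (g : ops n),
    HEq (comp (fun _ : Fin n => 1) (fun _ => unit) g) g
  comp_unit_right : ∀ {n : ℕ} (g : ops n),
    HEq (comp (fun _ : Fin 1 => n) (fun _ => g) unit) g
  comp_assoc : ∀ {k : ℕ} (ns : Fin k → ℕ) (ms : ∀ i, Fin (ns i) → ℕ)
    (hs : ∀ i j, ops (ms i j)) (gs : ∀ i, ops (ns i)) (f : ops k),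
    HEq (comp (fun p => ms ((finSigma ns).symm p).1 ((finSigma ns).symm p).2)
          (fun p => hs ((finSigma ns).symm p).1 ((finSigma ns).symm p).2)
          (comp ns gs f))
        (comp (fun i => ∑ j, ms i j) (fun i => comp (ms i) (hs i) (gs i)) f)
  equiv_inner : ∀ {k : ℕ} (ns : Fin k → ℕ) (σs : ∀ i, Equiv.Perm (Fin (ns i)))
    (gs : ∀ i, ops (ns i)) (f : ops k),
    comp ns (fun i => act (σs i) (gs i)) f
      = act (symComp ns σs (Equiv.refl (Fin k))) (comp ns gs f)
  equiv_outer : ∀ {k : ℕ} (ns : Fin k → ℕ) (τ : Equiv.Perm (Fin k))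
    (gs : ∀ i, ops (ns i)) (f : ops k),
    HEq (comp (fun i => ns (τ i)) (fun i => gs (τ i)) (act τ f))
        (act (symComp ns (fun i => Equiv.refl (Fin (ns i))) τ) (comp ns gs f))

/-- Composition `a ∗ b` of unary operations of an operad. -/
def SymOperad.comp1 (O : SymOperad) (a b : O.ops 1) : O.ops 1 :=
  cast (congrArg O.ops (by simp)) (O.comp (fun _ : Fin 1 => 1) (fun _ => a) b)

/-- Composition `⟨c 1, …, c r⟩ ∗ h` of an `r`-ary operation with unary operations. -/
def SymOperad.unaryComp (O : SymOperad) {r : ℕ} (c : Fin r → O.ops 1) (h : O.ops r) :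
    O.ops r :=
  cast (congrArg O.ops (by simp)) (O.comp (fun _ : Fin r => 1) c h)
/-- A Lawvere theory: a category with objects the natural numbers where `n` is the
`n`-fold power of `1` with chosen projections.  `comp f g` is `f` followed by `g`. -/
structure LawTheory where
  Hom : ℕ → ℕ → Type
  id : ∀ n : ℕ, Hom n n
  comp : ∀ {a b c : ℕ}, Hom a b → Hom b c → Hom a c
  id_comp : ∀ {a b : ℕ} (f : Hom a b), comp (id a) f = f
  comp_id : ∀ {a b : ℕ} (f : Hom a b), comp f (id b) = f
  assoc : ∀ {a b c d : ℕ} (f : Hom a b) (g : Hom b c) (h : Hom c d),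
    comp (comp f g) h = comp f (comp g h)
  proj : ∀ (n : ℕ), Fin n → Hom n 1
  tuple : ∀ {a n : ℕ}, (Fin n → Hom a 1) → Hom a n
  tuple_proj : ∀ {a n : ℕ} (fs : Fin n → Hom a 1) (i : Fin n),
    comp (tuple fs) (proj n i) = fs i
  tuple_eta : ∀ {a n : ℕ} (g : Hom a n),
    tuple (fun i => comp g (proj n i)) = g

namespace LawTheory

variable (T : LawTheory)

/-- The structural morphism `π_φ : n → m` induced by a function `φ : (m] → (n]`. -/
def pi {n m : ℕ} (φ : Fin m → Fin n) : T.Hom n m :=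
  T.tuple fun i => T.proj n (φ i)

/-- The product map `f₁ × ⋯ × f_k : ∑ ns i → k` of operations `fs i : ns i → 1`,
formed via the chosen projections and the lexicographic block decomposition. -/
def prodMap {k : ℕ} (ns : Fin k → ℕ) (fs : ∀ i, T.Hom (ns i) 1) :
    T.Hom (∑ i, ns i) k :=
  T.tuple fun i => T.comp (T.pi fun j : Fin (ns i) => finSigma ns ⟨i, j⟩) (fs i)

/-- Operadic composition of the operations of a Lawvere theory:
`⟨f₁,…,f_k⟩ ∗ f = f ∘ (f₁ × ⋯ × f_k)`. -/
def opComp {k : ℕ} (ns : Fin k → ℕ) (fs : ∀ i, T.Hom (ns i) 1) (f : T.Hom k 1) :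
    T.Hom (∑ i, ns i) 1 :=
  T.comp (T.prodMap ns fs) f

/-- The action `σ · f = f ∘ π_σ` of a permutation on an operation. -/
def opAct {n : ℕ} (σ : Equiv.Perm (Fin n)) (f : T.Hom n 1) : T.Hom n 1 :=
  T.comp (T.pi ⇑σ) f

/-- A morphism `f : a → b` is invertible (an isomorphism). -/
def IsInvertible {a b : ℕ} (f : T.Hom a b) : Prop :=
  ∃ g : T.Hom b a, T.comp f g = T.id a ∧ T.comp g f = T.id b

/-- Structural morphisms: the closure under isomorphism of the image of the unique
interpretation from the initial Lawvere theory `𝔽ᵒᵖ`. -/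
def Structural {n m : ℕ} (f : T.Hom n m) : Prop :=
  ∃ (φ : Fin m → Fin n) (u : T.Hom n n) (v : T.Hom m m),
    T.IsInvertible u ∧ T.IsInvertible v ∧ f = T.comp u (T.comp (T.pi φ) v)

/-- `e` is left orthogonal to `m`: unique diagonal fillers exist. -/
def Orthogonal {a b c d : ℕ} (e : T.Hom a b) (m : T.Hom c d) : Prop :=
  ∀ (u : T.Hom a c) (v : T.Hom b d), T.comp u m = T.comp e v →
    ∃! w : T.Hom b c, T.comp e w = u ∧ T.comp w m = v

/-- Analytic morphisms: those right orthogonal to all structural morphisms. -/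
def Analytic {c d : ℕ} (f : T.Hom c d) : Prop :=
  ∀ {a b : ℕ} (e : T.Hom a b), T.Structural e → T.Orthogonal e f

/-- The canonical map `ρ_n : S_n × Aut(1)ⁿ → Hom(n,n)`,
`(σ, a) ↦ (a₁ × ⋯ × a_n) ∘ π_σ`. -/
def rho (n : ℕ)
    (p : Equiv.Perm (Fin n) × (Fin n → {f : T.Hom 1 1 // T.IsInvertible f})) :
    T.Hom n n :=
  T.comp (T.pi ⇑p.1) (T.tuple fun i => T.comp (T.proj n i) (p.2 i).1)

/-- `T` has simple automorphisms: each `ρ_n` is a bijection onto the automorphisms. -/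
def HasSimpleAut : Prop :=
  ∀ n : ℕ, Function.Injective (T.rho n) ∧
    Set.range (T.rho n) = {f : T.Hom n n | T.IsInvertible f}

/-- `T` is an analytic Lawvere theory: structural and analytic morphisms form a
factorization system and `T` has simple automorphisms. -/
def IsAnalyticTheory : Prop :=
  (∀ {n m : ℕ} (f : T.Hom n m), ∃ (k : ℕ) (e : T.Hom n k) (g : T.Hom k m),
      T.Structural e ∧ T.Analytic g ∧ f = T.comp e g) ∧ T.HasSimpleAut

end LawTheory

/-- A morphism of symmetric operads. -/
structure OperadHom (O O' : SymOperad) where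
  map : ∀ n : ℕ, O.ops n → O'.ops n
  map_unit : map 1 O.unit = O'.unit
  map_comp : ∀ {k : ℕ} (ns : Fin k → ℕ) (gs : ∀ i, O.ops (ns i)) (f : O.ops k),
    map _ (O.comp ns gs f) = O'.comp ns (fun i => map _ (gs i)) (map k f)
  map_act : ∀ {n : ℕ} (σ : Equiv.Perm (Fin n)) (x : O.ops n),
    map n (O.act σ x) = O'.act σ (map n x)

/-- An interpretation of Lawvere theories: an identity-on-objects functor
preserving the chosen projections. -/
structure LawHom (T T' : LawTheory) where
  map : ∀ {a b : ℕ}, T.Hom a b → T'.Hom a b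
  map_id : ∀ n : ℕ, map (T.id n) = T'.id n
  map_comp : ∀ {a b c : ℕ} (f : T.Hom a b) (g : T.Hom b c),
    map (T.comp f g) = T'.comp (map f) (map g)
  map_proj : ∀ (n : ℕ) (i : Fin n), map (T.proj n i) = T'.proj n i

/-- `S` is the symmetric operad of operations of the Lawvere theory `T`. -/
def IsOperadOf (T : LawTheory) (S : SymOperad) : Prop :=
  S.ops = (fun n => T.Hom n 1) ∧ HEq S.unit (T.id 1) ∧
    HEq (@SymOperad.comp S) (@LawTheory.opComp T) ∧
    HEq (@SymOperad.act S) (@LawTheory.opAct T)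
/-- A span `(φ, f, (g_i))` with codomain component `1`: an operation of the span
Lawvere theory `P(O)`, given by an arity `r`, a function leg `φ : (r] → (n]` and an
operation `g ∈ O_r`. -/
def PreOp (O : SymOperad) (n : ℕ) : Type := Σ r : ℕ, (Fin r → Fin n) × O.ops r

/-- Equivalence of spans: `(φ, g) ∼ (φ ∘ σ, σ⁻¹ · g)`. -/
def PreRel (O : SymOperad) (n : ℕ) : PreOp O n → PreOp O n → Prop := fun x y =>
  ∃ σ : Equiv.Perm (Fin x.1), y = ⟨x.1, x.2.1 ∘ ⇑σ, O.act σ⁻¹ x.2.2⟩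

/-- Morphism components of the span Lawvere theory: equivalence classes of spans. -/
def SpanOp (O : SymOperad) (n : ℕ) : Type := Quot (PreRel O n)

/-- Composition of spans: pullback of the monotone leg along the function leg
together with operadic composition. -/
def compPre (O : SymOperad) {n m : ℕ} (x : PreOp O m) (y : Fin m → PreOp O n) :
    PreOp O n :=
  ⟨∑ l, (y (x.2.1 l)).1,
   fun p => (y (x.2.1 ((finSigma _).symm p).1)).2.1 ((finSigma _).symm p).2,
   O.comp (fun l => (y (x.2.1 l)).1) (fun l => (y (x.2.1 l)).2.2) x.2.2⟩

/-- An identification of a Lawvere theory `T` with the span Lawvere theory `P(O)`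
of a symmetric operad `O`: morphisms `n → m` are `m`-tuples of equivalence classes
of spans, and identities, projections, tupling and composition are computed by the
span formulas. -/
structure SpanModel (O : SymOperad) (T : LawTheory) where
  e : ∀ {n m : ℕ}, T.Hom n m ≃ (Fin m → SpanOp O n)
  id_eq : ∀ n : ℕ, e (T.id n) = fun i => Quot.mk _ ⟨1, fun _ => i, O.unit⟩
  proj_eq : ∀ (n : ℕ) (i : Fin n),
    e (T.proj n i) = fun _ : Fin 1 => Quot.mk _ ⟨1, fun _ => i, O.unit⟩
  tuple_eq : ∀ {a n : ℕ} (fs : Fin n → T.Hom a 1),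
    e (T.tuple fs) = fun i => e (fs i) 0
  comp_eq : ∀ {n m k : ℕ} (f : T.Hom n m) (g : T.Hom m k)
    (y : Fin m → PreOp O n) (x : Fin k → PreOp O m),
    (∀ i, e f i = Quot.mk _ (y i)) → (∀ j, e g j = Quot.mk _ (x j)) →
    ∀ j, e (T.comp f g) j = Quot.mk _ (compPre O (x j) y)

section Helpers

variable {O : SymOperad} {n : ℕ}

lemma preRel_equivalence (O : SymOperad) (n : ℕ) : Equivalence (PreRel O n) where
  refl x := by
    refine ⟨1, ?_⟩
    obtain ⟨r, φ, g⟩ := x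
    have h2 : O.act (1 : Equiv.Perm (Fin r))⁻¹ g = g := by
      rw [inv_one]; exact O.act_one g
    simp only [h2]
    rfl
  symm := by
    rintro ⟨r, φ, g⟩ y ⟨σ, rfl⟩
    refine ⟨σ⁻¹, ?_⟩
    have h1 : (φ ∘ ⇑σ) ∘ ⇑σ⁻¹ = φ := by
      funext l; simp
    have h2 : O.act σ⁻¹⁻¹ (O.act σ⁻¹ g) = g := by
      rw [← O.act_mul, inv_inv, mul_inv_cancel]; exact O.act_one g
    simp only [h1, h2]
    rfl
  trans := by
    rintro ⟨r, φ, g⟩ y z ⟨σ, rfl⟩ ⟨τ, rfl⟩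
    refine ⟨σ * τ, ?_⟩
    have h1 : (φ ∘ ⇑σ) ∘ ⇑τ = φ ∘ ⇑(σ * τ) := by
      funext l; simp [Equiv.Perm.mul_apply]
    have h2 : O.act τ⁻¹ (O.act σ⁻¹ g) = O.act (σ * τ)⁻¹ g := by
      rw [mul_inv_rev, O.act_mul]
    simp only [h1, h2]
    rfl

lemma quot_mk_eq_iff (x y : PreOp O n) :
    Quot.mk (PreRel O n) x = Quot.mk _ y ↔ PreRel O n x y :=
  Quot.eq.trans (Equivalence.eqvGen_iff (preRel_equivalence O n))

/-- Arity of a span class. -/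
def spanArity (O : SymOperad) (n : ℕ) : SpanOp O n → ℕ :=
  Quot.lift Sigma.fst (fun _ _ ⟨_, h⟩ => by rw [h])

lemma sum_one {k : ℕ} (t : Fin k → ℕ) (h : ∑ l, t l = 1) (ht : ∀ l, 1 ≤ t l) :
    k = 1 := by
  have h0 : k ≠ 0 := by rintro rfl; simp at h
  have h1 : k ≤ 1 := by
    calc k = ∑ _l : Fin k, 1 := by simp
    _ ≤ ∑ l, t l := Finset.sum_le_sum fun i _ => ht i
    _ = 1 := h
  omega

lemma sum_ne_zero {k : ℕ} (t : Fin k → ℕ) (h : ∑ l, t l = 1) : k ≠ 0 := by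
  rintro rfl; simp at h

lemma span_one_eq {N : ℕ} (hN : N = 1)
    (Φ : Fin N → Fin n) (G : O.ops N) (ψ : Fin 1 → Fin n) (u : O.ops 1)
    (h : Quot.mk (PreRel O n) ⟨N, Φ, G⟩ = Quot.mk _ ⟨1, ψ, u⟩) :
    (∀ l, Φ l = ψ 0) ∧ HEq G u := by
  subst hN
  obtain ⟨σ, hσ⟩ := (quot_mk_eq_iff _ _).mp h
  have hσ1 : σ = 1 := by
    exact Equiv.ext fun x => Subsingleton.elim _ _
  subst hσ1
  injection hσ with h1 h3
  have hψ : ψ = Φ ∘ ⇑(1 : Equiv.Perm (Fin 1)) := congrArg Prod.fst h3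
  have hu : u = O.act (1 : Equiv.Perm (Fin 1))⁻¹ G := congrArg Prod.snd h3
  constructor
  · intro l
    rw [Subsingleton.elim l 0]
    exact (congrFun hψ 0).symm
  · rw [hu, inv_one]
    exact heq_of_eq (O.act_one G).symm
end Helpers

lemma key {O : SymOperad} {n : ℕ} (ca db : Fin n → Fin n × O.ops 1)
    (hA : ∀ j : Fin n, Quot.mk (PreRel O n)
        (compPre O ⟨1, fun _ => (db j).1, (db j).2⟩
          (fun i => ⟨1, fun _ => (ca i).1, (ca i).2⟩))
      = Quot.mk _ ⟨1, fun _ => j, O.unit⟩) (j : Fin n) :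
    (ca ((db j).1)).1 = j ∧ O.comp1 (ca ((db j).1)).2 ((db j).2) = O.unit := by
  have hN : (compPre O (⟨1, fun _ => (db j).1, (db j).2⟩ : PreOp O n)
      (fun i => ⟨1, fun _ => (ca i).1, (ca i).2⟩)).1 = 1 := by
    simp [compPre]
  have h5 := span_one_eq hN
    (compPre O (⟨1, fun _ => (db j).1, (db j).2⟩ : PreOp O n)
      (fun i => ⟨1, fun _ => (ca i).1, (ca i).2⟩)).2.1
    (compPre O (⟨1, fun _ => (db j).1, (db j).2⟩ : PreOp O n)
      (fun i => ⟨1, fun _ => (ca i).1, (ca i).2⟩)).2.2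
    (fun _ => j) O.unit (hA j)
  exact ⟨h5.1 (Fin.cast hN.symm 0), cast_eq_iff_heq.mpr h5.2⟩

/-- in the span Lawvere theory `P(O)` of a symmetric operad `O`, every
isomorphism `n → n` is represented by a unique span `(φ, id_n, (a_i))` with `φ` a
bijection and each `a_i ∈ O₁` invertible for the operadic composition. -/
theorem span_iso_unique_representative (O : SymOperad) (T : LawTheory)
    (M : SpanModel O T) (n : ℕ) (f : T.Hom n n) (hf : T.IsInvertible f) :
    ∃! p : Equiv.Perm (Fin n) × (Fin n → O.ops 1),
      (∀ i, ∃ b : O.ops 1,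
        O.comp1 (p.2 i) b = O.unit ∧ O.comp1 b (p.2 i) = O.unit) ∧
      ∀ i, M.e f i = Quot.mk _ ⟨1, fun _ => p.1 i, p.2 i⟩ := by
  obtain ⟨g, hfg, hgf⟩ := hf
  choose y hy using fun i => Quot.exists_rep (M.e f i)
  choose x hx using fun j => Quot.exists_rep (M.e g j)
  have hidj : ∀ j : Fin n, M.e (T.id n) j = Quot.mk _ ⟨1, fun _ => j, O.unit⟩ :=
    fun j => congrFun (M.id_eq n) j
  have hfg' : ∀ j, Quot.mk (PreRel O n) (compPre O (x j) y)
      = Quot.mk _ ⟨1, fun _ => j, O.unit⟩ := by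
    intro j
    rw [← M.comp_eq f g y x (fun i => (hy i).symm) (fun j => (hx j).symm) j, hfg, hidj]
  have hgf' : ∀ i, Quot.mk (PreRel O n) (compPre O (y i) x)
      = Quot.mk _ ⟨1, fun _ => i, O.unit⟩ := by
    intro i
    rw [← M.comp_eq g f x y (fun j => (hx j).symm) (fun i => (hy i).symm) i, hgf, hidj]
  have har1 : ∀ j, ∑ l : Fin (x j).1, (y ((x j).2.1 l)).1 = 1 :=
    fun j => congrArg (spanArity O n) (hfg' j)
  have har2 : ∀ i, ∑ l : Fin (y i).1, (x ((y i).2.1 l)).1 = 1 :=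
    fun i => congrArg (spanArity O n) (hgf' i)
  have hxpos : ∀ j, 1 ≤ (x j).1 := fun j => Nat.pos_of_ne_zero (sum_ne_zero _ (har1 j))
  have hypos : ∀ i, 1 ≤ (y i).1 := fun i => Nat.pos_of_ne_zero (sum_ne_zero _ (har2 i))
  have hy1 : ∀ i, (y i).1 = 1 := fun i => sum_one _ (har2 i) (fun _ => hxpos _)
  have hx1 : ∀ j, (x j).1 = 1 := fun j => sum_one _ (har1 j) (fun _ => hypos _)
  have norm : ∀ (q : SpanOp O n) (z : PreOp O n), q = Quot.mk _ z → z.1 = 1 →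
      ∃ ca : Fin n × O.ops 1, q = Quot.mk _ ⟨1, fun _ => ca.1, ca.2⟩ := by
    rintro q ⟨r, φ, gz⟩ hq hr
    dsimp only at hr
    subst hr
    refine ⟨(φ 0, gz), ?_⟩
    have hφ : φ = fun _ => φ 0 := funext fun l => by rw [Subsingleton.elim l 0]
    rw [hq]
    dsimp only
    rw [← hφ]
  choose ca hca using fun i => norm (M.e f i) (y i) (hy i).symm (hy1 i)
  choose db hdb using fun j => norm (M.e g j) (x j) (hx j).symm (hx1 j)
  have hA : ∀ j : Fin n, Quot.mk (PreRel O n)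
      (compPre O ⟨1, fun _ => (db j).1, (db j).2⟩
        (fun i => ⟨1, fun _ => (ca i).1, (ca i).2⟩))
      = Quot.mk _ ⟨1, fun _ => j, O.unit⟩ := by
    intro j
    rw [← M.comp_eq f g _ _ hca hdb j, hfg, hidj]
  have hB : ∀ j : Fin n, Quot.mk (PreRel O n)
      (compPre O ⟨1, fun _ => (ca j).1, (ca j).2⟩
        (fun i => ⟨1, fun _ => (db i).1, (db i).2⟩))
      = Quot.mk _ ⟨1, fun _ => j, O.unit⟩ := by
    intro j
    rw [← M.comp_eq g f _ _ hdb hca j, hgf, hidj]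
  have hAk := key ca db hA
  have hBk := key db ca hB
  refine ⟨(⟨fun i => (ca i).1, fun j => (db j).1,
      fun i => (hBk i).1, fun j => (hAk j).1⟩, fun i => (ca i).2), ⟨?_, ?_⟩, ?_⟩
  · intro i
    refine ⟨(db ((ca i).1)).2, ?_, (hBk i).2⟩
    have := (hAk ((ca i).1)).2
    rwa [(hBk i).1] at this
  · intro i
    exact hca i
  · rintro q ⟨hq1, hq2⟩
    have step : ∀ i, q.1 i = (ca i).1 ∧ q.2 i = (ca i).2 := by
      intro i
      have h6 := span_one_eq (N := 1) rfl (fun _ => q.1 i) (q.2 i)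
        (fun _ => (ca i).1) (ca i).2 ((hq2 i).symm.trans (hca i))
      exact ⟨h6.1 0, eq_of_heq h6.2⟩
    have e1 : q.1 = ⟨fun i => (ca i).1, fun j => (db j).1,
        fun i => (hBk i).1, fun j => (hAk j).1⟩ :=
      Equiv.ext fun i => (step i).1
    have e2 : q.2 = fun i => (ca i).2 := funext fun i => (step i).2
    exact Prod.ext e1 e2
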